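/- Let Y and Z be sets (in the von Neumann universe) such that {∅} ⊗ ({∅} ∪ Y) = Z and Y ⊊ Z, where ⊗ denotes the unordered Cartesian product A ⊗ B = { {a,b} : a ∈ A, b ∈ B }. Then the rank of Z is finite (less than ω). -/

import Mathlib

/-- Unordered Cartesian product: `A ⊗ B = { {a,b} : a ∈ A, b ∈ B }`. -/
def ZFSet.uprod (A B : ZFSet) : ZFSet :=
  ZFSet.sep (fun z => ∃ a ∈ A, ∃ b ∈ B, z = {a, b}) (ZFSet.powerset (A ∪ B))

namespace StmtAux

universe u

/-- canonical chain -/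
def t : ℕ → ZFSet.{u}
  | 0 => {∅}
  | n + 1 => {∅, t n}

lemma rank_t (n : ℕ) : (t.{u} n).rank = n + 1 := by
  induction n with
  | zero =>
    show ZFSet.rank {∅} = _
    rw [ZFSet.rank_singleton, ZFSet.rank_empty, Order.succ_eq_add_one]
    simp
  | succ n ih =>
    show ZFSet.rank (insert ∅ {t n}) = _
    rw [ZFSet.rank_insert, ZFSet.rank_singleton, ih, ZFSet.rank_empty,
      Order.succ_eq_add_one, Order.succ_eq_add_one]
    have h1 : (0:Ordinal) + 1 ≤ ((n:Ordinal) + 1) + 1 :=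
      add_le_add_left (zero_le (a := ((n:Ordinal) + 1))) 1
    rw [max_eq_right h1]
    push_cast
    ring_nf

lemma t_inj {m n : ℕ} (h : t.{u} m = t.{u} n) : m = n := by
  have h2 := congrArg ZFSet.rank h
  rw [rank_t, rank_t] at h2
  have : m + 1 = n + 1 := by exact_mod_cast h2
  omega

end StmtAux

theorem stmt_0 (Y Z : ZFSet)
    (h₁ : ZFSet.uprod {∅} ({∅} ∪ Y) = Z)
    (h₂ : Y ⊆ Z) (h₃ : Y ≠ Z) :
    Z.rank < Ordinal.omega0 := by
  open StmtAux in
  -- membership in Z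
  have memZ : ∀ z, z ∈ Z ↔ (z = t 0 ∨ ∃ b ∈ Y, z = {∅, b}) := by
    intro z
    rw [← h₁, ZFSet.uprod, ZFSet.mem_sep]
    constructor
    · rintro ⟨-, a, ha, b, hb, rfl⟩
      rw [ZFSet.mem_singleton] at ha
      subst ha
      rw [ZFSet.mem_union, ZFSet.mem_singleton] at hb
      rcases hb with rfl | hb
      · left; apply ZFSet.ext; intro w; simp [t, ZFSet.mem_insert_iff]
      · right; exact ⟨b, hb, rfl⟩
    · rintro (rfl | ⟨b, hb, rfl⟩)
      · refine ⟨?_, ∅, ZFSet.mem_singleton.2 rfl, ∅,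
          ZFSet.mem_union.2 (Or.inl (ZFSet.mem_singleton.2 rfl)), ?_⟩
        · rw [ZFSet.mem_powerset]
          intro w hw
          rw [ZFSet.mem_union]
          left
          simpa [t] using hw
        · simp [t]
      · refine ⟨?_, ∅, ZFSet.mem_singleton.2 rfl, b,
          ZFSet.mem_union.2 (Or.inr hb), rfl⟩
        rw [ZFSet.mem_powerset]
        intro w hw
        rcases ZFSet.mem_insert_iff.1 hw with rfl | hw'
        · exact ZFSet.mem_union.2 (Or.inl (ZFSet.mem_singleton.2 rfl))
        · have hwY : w ∈ Y := by rwa [ZFSet.mem_singleton.1 hw']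
          exact ZFSet.mem_union.2 (Or.inr (ZFSet.mem_union.2 (Or.inr hwY)))
  -- every element of Y is some t n
  have memY_t : ∀ y ∈ Y, ∃ n, y = t n := by
    intro y
    induction y using ZFSet.inductionOn with
    | _ y ih =>
      intro hy
      rcases (memZ y).1 (h₂ hy) with rfl | ⟨b, hb, rfl⟩
      · exact ⟨0, rfl⟩
      · have hbmem : b ∈ ({∅, b} : ZFSet) := by simp
        obtain ⟨n, rfl⟩ := ih b hbmem hb
        exact ⟨n + 1, rfl⟩
  -- if t n ∈ Y then also t m ∈ Y for m ≤ n (downward closed)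
  have down : ∀ n, t n ∈ Y → ∀ m ≤ n, t m ∈ Y := by
    intro n
    induction n with
    | zero => intro h m hm; interval_cases m; exact h
    | succ n ih =>
      intro h m hm
      have hn : t n ∈ Y := by
        rcases (memZ (t (n+1))).1 (h₂ h) with he | ⟨b, hb, he⟩
        · exact absurd (t_inj he) (by omega)
        · obtain ⟨k, rfl⟩ := memY_t b hb
          have : n + 1 = k + 1 := t_inj he
          obtain rfl : n = k := by omega
          exact hb
      rcases Nat.lt_or_ge m (n+1) with h' | h'
      · exact ih hn m (by omega)
      · obtain rfl : m = n + 1 := by omega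
        exact h
  -- there is N with t N ∉ Y
  have ⟨N, hN⟩ : ∃ N, t N ∉ Y := by
    by_contra hall
    push_neg at hall
    apply h₃
    apply ZFSet.ext
    intro z
    constructor
    · exact fun h => h₂ h
    · intro hz
      rcases (memZ z).1 hz with rfl | ⟨b, hb, rfl⟩
      · exact hall 0
      · obtain ⟨k, rfl⟩ := memY_t b hb
        exact hall (k+1)
  -- all elements of Y are t m with m < N
  have bound : ∀ y ∈ Y, ∃ m < N, y = t m := by
    intro y hy
    obtain ⟨m, rfl⟩ := memY_t y hy
    refine ⟨m, ?_, rfl⟩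
    by_contra h'
    exact hN (down m hy N (by omega))
  -- rank bound
  have hZ : Z.rank ≤ (N + 2 : ℕ) := by
    rw [ZFSet.rank_le_iff]
    intro z hz
    rcases (memZ z).1 hz with rfl | ⟨b, hb, rfl⟩
    · rw [rank_t]
      exact_mod_cast Nat.cast_lt.2 (by omega : (0:ℕ)+1 < N+2)
    · obtain ⟨m, hm, rfl⟩ := bound b hb
      have : ({∅, t m} : ZFSet) = t (m+1) := rfl
      rw [this, rank_t]
      exact_mod_cast Nat.cast_lt.2 (by omega : m+1+1 < N+2)
  exact lt_of_le_of_lt hZ (Ordinal.nat_lt_omega0 _)
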